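/- Let S be a skeleton with head e and periphery S₀, and let K = ⋃_{u ∈ S₀} K(u), where K(u) = conv{0, e, u}. Then K is a convex set containing 0 and e, and e is an extreme point of K. -/

import Mathlib

open Set

/-- A *skeleton* with head `e` in a real vector space `X`. -/
structure IsSkeleton {X : Type*} [AddCommGroup X] [Module ℝ X] (S : Set X) (e : X) : Prop where
  head_ne : e ≠ 0
  zero_mem : (0 : X) ∈ S
  head_mem : e ∈ S
  compl_mem : ∀ u ∈ S, e - u ∈ S
  comb : ∀ u ∈ S, ∀ v ∈ S, ∀ l : ℝ, 0 ≤ l → l ≤ 1 →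
    ∃ w ∈ S \ {0, e}, ∃ a b : ℝ, 0 ≤ a ∧ 0 ≤ b ∧
      l • u + (1 - l) • v = a • e + b • w
  head_sum : ∀ n : ℕ, 2 ≤ n → ∀ u : Fin n → X, ∀ a : Fin n → ℝ,
    (∀ i, u i ∈ S \ {0, e}) → (∀ i, 0 < a i) →
    e = ∑ i, a i • u i → ∀ j, 1 ≤ ∑ i ∈ Finset.univ.erase j, a i

section SkeletonHelpers

variable {X : Type*} [AddCommGroup X] [Module ℝ X] {S : Set X} {e : X}

lemma skel_H1 (h : IsSkeleton S e) {u : X} {c : ℝ} (hu : u ∈ S \ {0, e})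
    (hc : 0 < c) (he : e = c • u) : 2 ≤ c := by
  have := h.head_sum 2 le_rfl ![u, u] ![c/2, c/2]
    (by intro i; fin_cases i <;> simpa using hu)
    (by intro i; fin_cases i <;> simpa using half_pos hc)
    (by simp [Fin.sum_univ_two, ← add_smul]; rw [← he]) 0
  rw [Finset.sum_erase_eq_sub (Finset.mem_univ _)] at this
  simp [Fin.sum_univ_two] at this
  linarith

lemma skel_H2 (h : IsSkeleton S e) {u v : X} {b c : ℝ}
    (hu : u ∈ S \ {0, e}) (hv : v ∈ S \ {0, e})
    (hb : 0 < b) (hc : 0 < c) (he : e = b • u + c • v) : 1 ≤ b ∧ 1 ≤ c := by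
  have key := h.head_sum 2 le_rfl ![u, v] ![b, c]
    (by intro i; fin_cases i <;> simp_all)
    (by intro i; fin_cases i <;> simp_all)
    (by simpa [Fin.sum_univ_two] using he)
  have h0 := key 1
  have h1 := key 0
  rw [Finset.sum_erase_eq_sub (Finset.mem_univ _)] at h0 h1
  simp [Fin.sum_univ_two] at h0 h1
  constructor <;> linarith

lemma skel_H3 (h : IsSkeleton S e) {u v w : X} {b c d : ℝ}
    (hu : u ∈ S \ {0, e}) (hv : v ∈ S \ {0, e}) (hw : w ∈ S \ {0, e})
    (hb : 0 < b) (hc : 0 < c) (hd : 0 < d)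
    (he : e = b • u + c • v + d • w) : 1 ≤ b + c := by
  have key := h.head_sum 3 (by norm_num) ![u, v, w] ![b, c, d]
    (by intro i; fin_cases i <;> simp_all)
    (by intro i; fin_cases i <;> simp_all)
    (by simpa [Fin.sum_univ_three, add_assoc] using he) 2
  rw [Finset.sum_erase_eq_sub (Finset.mem_univ _)] at key
  simp [Fin.sum_univ_three] at key
  linarith

lemma tri_mem_iff {e u x : X} :
    x ∈ convexHull ℝ ({0, e, u} : Set X) ↔
      ∃ a b : ℝ, 0 ≤ a ∧ 0 ≤ b ∧ a + b ≤ 1 ∧ x = a • e + b • u := by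
  constructor
  · intro hx
    have hsub : convexHull ℝ ({0, e, u} : Set X) ⊆
        {x | ∃ a b : ℝ, 0 ≤ a ∧ 0 ≤ b ∧ a + b ≤ 1 ∧ x = a • e + b • u} := by
      apply convexHull_min
      · rintro y (rfl | rfl | rfl)
        · exact ⟨0, 0, le_rfl, le_rfl, by norm_num, by simp⟩
        · exact ⟨1, 0, zero_le_one, le_rfl, by norm_num, by simp⟩
        · exact ⟨0, 1, le_rfl, zero_le_one, by norm_num, by simp⟩
      · rintro p ⟨a₁, b₁, ha₁, hb₁, hab₁, rfl⟩ q ⟨a₂, b₂, ha₂, hb₂, hab₂, rfl⟩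
          la lb hla hlb hlab
        refine ⟨la * a₁ + lb * a₂, la * b₁ + lb * b₂, by positivity, by positivity,
          by nlinarith, ?_⟩
        match_scalars <;> ring
    exact hsub hx
  · rintro ⟨a, b, ha, hb, hab, rfl⟩
    have hC : Convex ℝ (convexHull ℝ ({0, e, u} : Set X)) := convex_convexHull ℝ _
    have h0 : (0 : X) ∈ convexHull ℝ ({0, e, u} : Set X) :=
      subset_convexHull ℝ _ (by simp)
    have hE : e ∈ convexHull ℝ ({0, e, u} : Set X) :=
      subset_convexHull ℝ _ (by simp)
    have hU : u ∈ convexHull ℝ ({0, e, u} : Set X) :=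
      subset_convexHull ℝ _ (by simp)
    rcases eq_or_lt_of_le (by linarith : (0:ℝ) ≤ a + b) with hs | hs
    · have ha0 : a = 0 := by linarith
      have hb0 : b = 0 := by linarith
      simp [ha0, hb0, h0]
    · have hm : (a / (a + b)) • e + (b / (a + b)) • u ∈
          convexHull ℝ ({0, e, u} : Set X) :=
        hC hE hU (by positivity) (by positivity) (by field_simp)
      have h2 : (a + b) • ((a / (a + b)) • e + (b / (a + b)) • u) +
          (1 - (a + b)) • (0 : X) ∈ convexHull ℝ ({0, e, u} : Set X) :=
        hC hm h0 (le_of_lt hs) (by linarith) (by ring)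
      convert h2 using 1
      rw [smul_add, smul_smul, smul_smul, smul_zero, add_zero,
        mul_div_cancel₀ _ (ne_of_gt hs), mul_div_cancel₀ _ (ne_of_gt hs)]

lemma diff_mem_per (h : IsSkeleton S e) {w : X} (hw : w ∈ S \ {0, e}) :
    e - w ∈ S \ {0, e} := by
  obtain ⟨hwS, hw2⟩ := hw
  simp only [Set.mem_insert_iff, Set.mem_singleton_iff, not_or] at hw2
  refine ⟨h.compl_mem w hwS, ?_⟩
  simp only [Set.mem_insert_iff, Set.mem_singleton_iff, not_or]
  constructor
  · intro hc; exact hw2.2 ((sub_eq_zero.mp hc).symm)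
  · intro hc; exact hw2.1 (sub_eq_self.mp hc)

/-- Key lemma: the `comb` representation can be taken with `a + b ≤ 1`. -/
lemma skel_comb' (h : IsSkeleton S e) {u v : X} (hu : u ∈ S \ {0, e})
    (hv : v ∈ S \ {0, e}) {l : ℝ} (hl0 : 0 ≤ l) (hl1 : l ≤ 1) :
    ∃ w ∈ S \ {0, e}, ∃ a b : ℝ, 0 ≤ a ∧ 0 ≤ b ∧ a + b ≤ 1 ∧
      l • u + (1 - l) • v = a • e + b • w := by
  obtain ⟨w, hw, a, b, ha, hb, heq⟩ := h.comb u hu.1 v hv.1 l hl0 hl1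
  rcases eq_or_lt_of_le hb with hb0 | hbpos
  · -- b = 0
    have heq' : l • u + (1 - l) • v = a • e := by rw [heq, ← hb0]; simp
    have ha1 : a ≤ 1 := by
      by_contra hcon
      push_neg at hcon
      have hapos : (0:ℝ) < a := lt_trans zero_lt_one hcon
      have h2 : a • e = a • ((l / a) • u + ((1 - l) / a) • v) := by
        rw [← heq']; match_scalars <;> (field_simp; try ring)
      have hee : e = (l / a) • u + ((1 - l) / a) • v :=
        smul_right_injective X (ne_of_gt hapos) h2
      rcases eq_or_lt_of_le hl0 with hl0' | hlpos
      · rw [← hl0'] at hee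
        simp only [zero_div, zero_smul, zero_add, sub_zero] at hee
        have := skel_H1 h hv (one_div_pos.mpr hapos) hee
        rw [le_div_iff₀ hapos] at this
        linarith
      · rcases eq_or_lt_of_le hl1 with hl1' | hl1'
        · rw [hl1'] at hee
          simp only [sub_self, zero_div, zero_smul, add_zero] at hee
          have := skel_H1 h hu (one_div_pos.mpr hapos) hee
          rw [le_div_iff₀ hapos] at this
          linarith
        · have := (skel_H2 h hu hv (div_pos hlpos hapos)
            (div_pos (by linarith) hapos) hee).1
          rw [le_div_iff₀ hapos] at this
          linarith
    exact ⟨w, hw, a, 0, ha, le_rfl, by linarith, by rw [heq']; simp⟩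
  · -- b > 0
    have hew : e - w ∈ S \ {0, e} := diff_mem_per h hw
    have htpos : (0:ℝ) < a + b := by linarith
    have key : (a + b) • e = l • u + (1 - l) • v + b • (e - w) := by
      rw [smul_sub, heq]
      module
    have h2 : (a + b) • e = (a + b) • ((l / (a + b)) • u
        + ((1 - l) / (a + b)) • v + (b / (a + b)) • (e - w)) := by
      rw [key]; match_scalars <;> (field_simp; try ring)
    have hee : e = (l / (a + b)) • u + ((1 - l) / (a + b)) • v
        + (b / (a + b)) • (e - w) :=
      smul_right_injective X (ne_of_gt htpos) h2
    have hab1 : a + b ≤ 1 := by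
      rcases eq_or_lt_of_le hl0 with hl0' | hlpos
      · rw [← hl0'] at hee
        simp only [zero_div, zero_smul, zero_add, sub_zero] at hee
        have := (skel_H2 h hv hew (one_div_pos.mpr htpos)
          (div_pos hbpos htpos) hee).1
        rw [le_div_iff₀ htpos] at this
        linarith
      · rcases eq_or_lt_of_le hl1 with hl1' | hl1'
        · rw [hl1'] at hee
          simp only [sub_self, zero_div, zero_smul, add_zero] at hee
          have := (skel_H2 h hu hew (one_div_pos.mpr htpos)
            (div_pos hbpos htpos) hee).1
          rw [le_div_iff₀ htpos] at this
          linarith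
        · have := skel_H3 h hu hv hew (div_pos hlpos htpos)
            (div_pos (by linarith) htpos) (div_pos hbpos htpos) hee
          have heq2 : l / (a + b) + (1 - l) / (a + b) = 1 / (a + b) := by
            field_simp; ring
          rw [heq2, le_div_iff₀ htpos] at this
          linarith
    exact ⟨w, hw, a, b, ha, hb, hab1, heq⟩

lemma skel_combo3 (h : IsSkeleton S e) {u v : X} (hu : u ∈ S \ {0, e})
    (hv : v ∈ S \ {0, e}) {α β γ : ℝ} (hα : 0 ≤ α) (hβ : 0 ≤ β) (hγ : 0 ≤ γ)
    (hsum : α + β + γ ≤ 1) :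
    ∃ w ∈ S \ {0, e}, ∃ a b : ℝ, 0 ≤ a ∧ 0 ≤ b ∧ a + b ≤ 1 ∧
      α • e + β • u + γ • v = a • e + b • w := by
  by_cases hs : β + γ = 0
  · have hβ0 : β = 0 := by linarith
    have hγ0 : γ = 0 := by linarith
    exact ⟨u, hu, α, 0, hα, le_rfl, by linarith, by simp [hβ0, hγ0]⟩
  · have hspos : 0 < β + γ := lt_of_le_of_ne (by linarith) (Ne.symm hs)
    obtain ⟨w, hw, a, b, ha, hb, hab, heq⟩ := skel_comb' h hu hv
      (div_nonneg hβ hspos.le) (by rw [div_le_one hspos]; linarith)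
    have h1l : 1 - β / (β + γ) = γ / (β + γ) := by field_simp; ring
    have h2 : β • u + γ • v = (β + γ) • (a • e + b • w) := by
      rw [← heq, h1l]
      match_scalars <;> (field_simp; try ring)
    refine ⟨w, hw, α + (β + γ) * a, (β + γ) * b,
      by positivity, by positivity, by nlinarith, ?_⟩
    rw [add_assoc, h2]
    module


end SkeletonHelpers

theorem skeleton_K_convex_extreme
    {X : Type*} [AddCommGroup X] [Module ℝ X] {S : Set X} {e : X}
    (h : IsSkeleton S e) :
    Convex ℝ (⋃ u ∈ S \ {0, e}, convexHull ℝ {0, e, u}) ∧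
    (0 : X) ∈ (⋃ u ∈ S \ {0, e}, convexHull ℝ {0, e, u}) ∧
    e ∈ (⋃ u ∈ S \ {0, e}, convexHull ℝ {0, e, u}) ∧
    e ∈ Set.extremePoints ℝ (⋃ u ∈ S \ {0, e}, convexHull ℝ {0, e, u}) := by
  obtain ⟨w₀, hw₀, -⟩ := h.comb 0 h.zero_mem 0 h.zero_mem 0 le_rfl zero_le_one
  have h0K : (0 : X) ∈ ⋃ u ∈ S \ {0, e}, convexHull ℝ {0, e, u} :=
    Set.mem_iUnion₂.mpr ⟨w₀, hw₀, subset_convexHull ℝ _ (by simp)⟩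
  have heK : e ∈ ⋃ u ∈ S \ {0, e}, convexHull ℝ {0, e, u} :=
    Set.mem_iUnion₂.mpr ⟨w₀, hw₀, subset_convexHull ℝ _ (by simp)⟩
  have hconv : Convex ℝ (⋃ u ∈ S \ {0, e}, convexHull ℝ {0, e, u}) := by
    intro x hx y hy la lb hla hlb hlab
    rw [Set.mem_iUnion₂] at hx hy ⊢
    obtain ⟨u, hu, hxu⟩ := hx
    obtain ⟨v, hv, hyv⟩ := hy
    rw [tri_mem_iff] at hxu hyv
    obtain ⟨a₁, b₁, ha₁, hb₁, hab₁, rfl⟩ := hxu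
    obtain ⟨a₂, b₂, ha₂, hb₂, hab₂, rfl⟩ := hyv
    obtain ⟨w, hw, a, b, ha, hb, hab, heq⟩ := skel_combo3 h hu hv
      (α := la * a₁ + lb * a₂) (β := la * b₁) (γ := lb * b₂)
      (by positivity) (by positivity) (by positivity) (by nlinarith)
    refine ⟨w, hw, ?_⟩
    rw [tri_mem_iff]
    refine ⟨a, b, ha, hb, hab, ?_⟩
    rw [← heq]
    module
  refine ⟨hconv, h0K, heK, ?_⟩
  rw [mem_extremePoints]
  refine ⟨heK, ?_⟩
  intro x₁ hx₁ x₂ hx₂ hseg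
  rw [Set.mem_iUnion₂] at hx₁ hx₂
  obtain ⟨u, hu, hxu⟩ := hx₁
  obtain ⟨v, hv, hyv⟩ := hx₂
  rw [tri_mem_iff] at hxu hyv
  obtain ⟨a₁, b₁, ha₁, hb₁, hab₁, rfl⟩ := hxu
  obtain ⟨a₂, b₂, ha₂, hb₂, hab₂, rfl⟩ := hyv
  obtain ⟨la, lb, hla, hlb, hlab, hsum⟩ := hseg
  set A := la * a₁ + lb * a₂ with hA
  set B := la * b₁ with hB
  set C := lb * b₂ with hC
  have hsum' : A • e + B • u + C • v
      = la • (a₁ • e + b₁ • u) + lb • (a₂ • e + b₂ • v) := by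
    rw [hA, hB, hC]
    module
  have heA : A • e + B • u + C • v = e := hsum'.trans hsum
  have hAnn : 0 ≤ A := by positivity
  have hBnn : 0 ≤ B := mul_nonneg hla.le hb₁
  have hCnn : 0 ≤ C := mul_nonneg hlb.le hb₂
  have hABC : A + B + C ≤ 1 := by nlinarith
  have hBC0 : B = 0 ∧ C = 0 := by
    by_contra hcon
    have hBCpos : 0 < B + C := by
      rcases eq_or_lt_of_le hBnn with hB0 | hBpos
      · rcases eq_or_lt_of_le hCnn with hC0 | hCpos
        · exact absurd ⟨hB0.symm, hC0.symm⟩ hcon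
        · linarith
      · linarith
    have h1A : 0 < 1 - A := by linarith
    have h3 : B • u + C • v = (1 - A) • e := by
      have h4 : (A • e + B • u + C • v) - A • e = e - A • e := by rw [heA]
      rw [sub_smul, one_smul, ← h4]
      abel
    have h5 : (1 - A) • e = (1 - A) • ((B / (1 - A)) • u + (C / (1 - A)) • v) := by
      rw [← h3]
      match_scalars <;> (field_simp; try ring)
    have hee : e = (B / (1 - A)) • u + (C / (1 - A)) • v :=
      smul_right_injective X (ne_of_gt h1A) h5
    have hBC1A : B + C ≤ 1 - A := by linarith
    rcases eq_or_lt_of_le hBnn with hB0 | hBpos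
    · -- B = 0, C > 0
      have hCpos : 0 < C := by
        rcases eq_or_lt_of_le hCnn with hC0 | hCpos
        · exact absurd ⟨hB0.symm, hC0.symm⟩ hcon
        · exact hCpos
      rw [← hB0] at hee
      simp only [zero_div, zero_smul, zero_add] at hee
      have := skel_H1 h hv (div_pos hCpos h1A) hee
      rw [le_div_iff₀ h1A] at this
      linarith
    · rcases eq_or_lt_of_le hCnn with hC0 | hCpos
      · -- C = 0, B > 0
        rw [← hC0] at hee
        simp only [zero_div, zero_smul, add_zero] at hee
        have := skel_H1 h hu (div_pos hBpos h1A) hee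
        rw [le_div_iff₀ h1A] at this
        linarith
      · -- B > 0, C > 0
        obtain ⟨this1, this2⟩ := skel_H2 h hu hv (div_pos hBpos h1A)
          (div_pos hCpos h1A) hee
        rw [le_div_iff₀ h1A] at this1 this2
        linarith
  obtain ⟨hB0, hC0⟩ := hBC0
  have hb₁0 : b₁ = 0 := by
    rcases mul_eq_zero.mp hB0 with hc | hc
    · exact absurd hc (ne_of_gt hla)
    · exact hc
  have hb₂0 : b₂ = 0 := by
    rcases mul_eq_zero.mp hC0 with hc | hc
    · exact absurd hc (ne_of_gt hlb)
    · exact hc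
  have hAe : A • e = e := by
    rw [hB0, hC0] at heA
    simpa using heA
  have hA1 : A = 1 := by
    have : (1 - A) • e = 0 := by
      rw [sub_smul, one_smul, hAe, sub_self]
    rcases smul_eq_zero.mp this with hc | hc
    · linarith [sub_eq_zero.mp (by linarith [hc] : (1:ℝ) - A = 0)]
    · exact absurd hc h.head_ne
  have ha₁1 : a₁ = 1 := by
    apply le_antisymm (by linarith)
    by_contra hcon
    push_neg at hcon
    have h1 : la * a₁ < la * 1 := mul_lt_mul_of_pos_left hcon hla
    have h2 : lb * a₂ ≤ lb * 1 := mul_le_mul_of_nonneg_left (by linarith) hlb.le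
    rw [hA] at hA1
    linarith
  have ha₂1 : a₂ = 1 := by
    apply le_antisymm (by linarith)
    by_contra hcon
    push_neg at hcon
    have h1 : lb * a₂ < lb * 1 := mul_lt_mul_of_pos_left hcon hlb
    have h2 : la * a₁ ≤ la * 1 := mul_le_mul_of_nonneg_left (by linarith) hla.le
    rw [hA] at hA1
    linarith
  constructor
  · rw [ha₁1, hb₁0]; simp
  · rw [ha₂1, hb₂0]; simp
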